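/- For any odd integer n ≥ 3, the set of imaginary quadratic fields {ℚ(√(1 − 4k^n)) : k an integer, k ≥ 2} is infinite; equivalently, the set of squarefree parts of the integers 1 − 4k^n, as k ranges over the integers k ≥ 2, is infinite. -/

import Mathlib

/-- The quadratic field `ℚ(√d)`, realized as the subfield of `ℂ` generated over `ℚ`
by a complex square root of `d`. -/
noncomputable def Qsqrt (d : ℤ) : IntermediateField ℚ ℂ :=
  IntermediateField.adjoin ℚ {((d : ℂ) ^ ((1 : ℂ) / 2))}

/-- The class number of `ℚ(√d)`: the order of the ideal class group of its ring of
integers. -/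
noncomputable def classNumSqrt (d : ℤ) : ℕ :=
  Nat.card (ClassGroup (NumberField.RingOfIntegers (Qsqrt d)))

lemma sq_root_aux (d : ℤ) : ((d : ℂ) ^ ((1 : ℂ) / 2)) ^ 2 = (d : ℂ) := by
  have := Complex.cpow_nat_inv_pow (d : ℂ) (n := 2) (by norm_num)
  norm_num at this ⊢
  exact this

lemma exists_rat_add_of_mem {x : ℂ} {d : ℤ} (hx : x ^ 2 = (d : ℂ)) {y : ℂ}
    (hy : y ∈ Algebra.adjoin ℚ ({x} : Set ℂ)) : ∃ p q : ℚ, y = p + q * x := by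
  induction hy using Algebra.adjoin_induction with
  | mem z hz =>
    rcases hz with rfl
    exact ⟨0, 1, by push_cast; ring⟩
  | algebraMap r => exact ⟨r, 0, by rw [eq_ratCast]; push_cast; ring⟩
  | add a b _ _ ha hb =>
    obtain ⟨p, q, rfl⟩ := ha; obtain ⟨r, s, rfl⟩ := hb
    exact ⟨p + r, q + s, by push_cast; ring⟩
  | mul a b _ _ ha hb =>
    obtain ⟨p, q, rfl⟩ := ha; obtain ⟨r, s, rfl⟩ := hb
    refine ⟨p * r + q * s * (d : ℚ), p * s + q * r, ?_⟩
    push_cast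
    linear_combination ((q : ℂ) * (s : ℂ)) * hx

/-- If two imaginary quadratic fields coincide, the product of the (positive) radicands
is a perfect square. -/
lemma isSquare_of_Qsqrt_eq {a b : ℤ} (ha : 0 < a) (hb : 0 < b)
    (h : Qsqrt (-a) = Qsqrt (-b)) : ∃ c : ℤ, a * b = c ^ 2 := by
  set x : ℂ := (((-a : ℤ) : ℂ) ^ ((1 : ℂ) / 2)) with hxdef
  set y : ℂ := (((-b : ℤ) : ℂ) ^ ((1 : ℂ) / 2)) with hydef
  have hx : x ^ 2 = ((-a : ℤ) : ℂ) := sq_root_aux _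
  have hy : y ^ 2 = ((-b : ℤ) : ℂ) := sq_root_aux _
  have hx' : x ^ 2 = -(a : ℂ) := by rw [hx]; push_cast; ring
  have hy' : y ^ 2 = -(b : ℂ) := by rw [hy]; push_cast; ring
  have hxim : x.im ≠ 0 := by
    intro h0
    have h1 : (x ^ 2).re = x.re ^ 2 - x.im ^ 2 := by rw [sq, Complex.mul_re]; ring
    have h2 : (-(a : ℂ)).re = -(a : ℝ) := by simp
    rw [hx', h2, h0] at h1
    have : (0 : ℝ) ≤ x.re ^ 2 := sq_nonneg _
    have ha' : (0 : ℝ) < (a : ℝ) := by exact_mod_cast ha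
    nlinarith
  have hxint : IsIntegral ℚ x := by
    refine IsIntegral.of_pow two_pos ?_
    rw [hx]
    have : ((-a : ℤ) : ℂ) = algebraMap ℚ ℂ ((-a : ℤ) : ℚ) := by push_cast; simp
    rw [this]
    exact isIntegral_algebraMap
  have hymem : y ∈ Qsqrt (-a) := by
    rw [h]
    exact IntermediateField.mem_adjoin_simple_self ℚ y
  have hymem' : y ∈ Algebra.adjoin ℚ ({x} : Set ℂ) := by
    have h2 := IntermediateField.adjoin_simple_toSubalgebra_of_isAlgebraic hxint.isAlgebraic
    have : y ∈ (IntermediateField.adjoin ℚ ({x} : Set ℂ)).toSubalgebra := hymem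
    rwa [h2] at this
  obtain ⟨p, q, hpq⟩ := exists_rat_add_of_mem hx hymem'
  have key : (((p ^ 2 - q ^ 2 * a : ℚ)) : ℂ) + (((2 * p * q : ℚ)) : ℂ) * x
      = (((-b : ℚ)) : ℂ) := by
    have h3 := hy'
    rw [hpq] at h3
    push_cast
    linear_combination h3 - (q : ℂ) ^ 2 * hx'
  have him : ((2 * p * q : ℚ) : ℝ) * x.im = 0 := by
    have h9 := congrArg Complex.im key
    simp only [Complex.add_im, Complex.mul_im, Complex.ratCast_im, Complex.ratCast_re,
      zero_mul, mul_zero, zero_add, add_zero] at h9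
    exact h9
  have hpq0 : p = 0 ∨ q = 0 := by
    rcases mul_eq_zero.mp him with h4 | h4
    · have h5 : (2 : ℚ) * p * q = 0 := by exact_mod_cast h4
      have h6 : p * q = 0 := by linarith
      exact mul_eq_zero.mp h6
    · exact absurd h4 hxim
  rcases hpq0 with hp0 | hq0
  · -- p = 0 : y = q x, so b = q² a, and ab = (qa)².
    rw [hp0] at hpq
    have h5 : ((q : ℂ)) ^ 2 * (-(a : ℂ)) = -(b : ℂ) := by
      rw [← hx', ← hy', hpq]; push_cast; ring
    have h6 : (q : ℚ) ^ 2 * (a : ℚ) = (b : ℚ) := by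
      have h7 : ((q ^ 2 * a : ℚ) : ℂ) = ((b : ℚ) : ℂ) := by
        push_cast
        linear_combination -h5
      exact_mod_cast h7
    set r : ℚ := q * a with hrdef
    have hr2 : r ^ 2 = ((a * b : ℤ) : ℚ) := by
      rw [hrdef]
      push_cast
      linear_combination (a : ℚ) * h6
    have hrint : IsIntegral ℤ r := by
      refine IsIntegral.of_pow two_pos ?_
      rw [hr2]
      exact isIntegral_algebraMap (x := (a * b : ℤ))
    obtain ⟨c, hc⟩ := IsIntegrallyClosed.isIntegral_iff.mp hrint
    refine ⟨c, ?_⟩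
    have : ((c : ℚ)) ^ 2 = ((a * b : ℤ) : ℚ) := by rw [show ((c : ℚ)) = r from hc, hr2]
    exact_mod_cast this.symm
  · -- q = 0 : y rational, but y² = -b < 0, impossible.
    exfalso
    rw [hq0] at hpq
    have h5 : ((p : ℂ)) ^ 2 = -(b : ℂ) := by rw [← hy', hpq]; push_cast; ring
    have h6 : (p : ℚ) ^ 2 = -(b : ℚ) := by
      have h7 : ((p ^ 2 : ℚ) : ℂ) = ((-b : ℚ) : ℂ) := by push_cast; linear_combination h5
      exact_mod_cast h7
    have hb' : (0 : ℚ) < (b : ℚ) := by exact_mod_cast hb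
    nlinarith [sq_nonneg p]

lemma sq_ne_three_mod_four (z : ZMod 4) : z ^ 2 ≠ 3 := by revert z; decide

/-- For any odd integer `n ≥ 3`, the set of imaginary quadratic fields
`ℚ(√(1 − 4kⁿ))` for integers `k ≥ 2` is infinite. -/
theorem infinite_fields_one_sub_four_pow (n : ℕ) (hn : 3 ≤ n) (hnodd : Odd n) :
    {F : IntermediateField ℚ ℂ | ∃ k : ℤ, 2 ≤ k ∧ F = Qsqrt (1 - 4 * k ^ n)}.Infinite := by
  -- the recursively defined sequence k₀ = 2, k_{i+1} = k_i * (4 k_i ^ n - 1)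
  set N : ℤ → ℤ := fun k => 4 * k ^ n - 1 with hN
  set g : ℕ → ℤ := fun i => Nat.rec 2 (fun _ gi => gi * (4 * gi ^ n - 1)) i with hg
  have hg0 : g 0 = 2 := rfl
  have hgs : ∀ i, g (i + 1) = g i * N (g i) := fun i => rfl
  have hg2 : ∀ i, 2 ≤ g i := by
    intro i
    induction i with
    | zero => norm_num [hg0]
    | succ i ih =>
      rw [hgs]
      have h1 : 1 ≤ g i ^ n := one_le_pow₀ (by linarith)
      have h2 : 1 ≤ N (g i) := by simp only [hN]; linarith
      nlinarith
  have hNpos : ∀ i, 3 ≤ N (g i) := by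
    intro i
    have h1 : 1 ≤ g i ^ n := one_le_pow₀ (by linarith [hg2 i])
    simp only [hN]; linarith
  have hdvd : ∀ i j, j < i → N (g j) ∣ g i := by
    intro i
    induction i with
    | zero => intro j hj; omega
    | succ i ih =>
      intro j hj
      rw [hgs]
      rcases Nat.lt_succ_iff_lt_or_eq.mp hj with h | rfl
      · exact (ih j h).mul_right _
      · exact Dvd.intro_left _ rfl
  have hcop : ∀ i j, i < j → IsCoprime (N (g i)) (N (g j)) := by
    intro i j hij
    obtain ⟨t, ht⟩ := hdvd j i hij
    have hn1 : n ≠ 0 := by omega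
    obtain ⟨s, hs⟩ : N (g i) ∣ 4 * g j ^ n := by
      refine Dvd.dvd.mul_left ?_ 4
      exact ht ▸ (dvd_mul_right _ t).pow hn1
    refine ⟨s, -1, ?_⟩
    have : N (g j) = N (g i) * s - 1 := by simp only [hN]; rw [← hs]
    rw [this]; ring
  -- the map into the set of fields
  set f : ℕ → IntermediateField ℚ ℂ := fun i => Qsqrt (1 - 4 * g i ^ n) with hf
  have hmem : ∀ i, f i ∈ {F : IntermediateField ℚ ℂ | ∃ k : ℤ, 2 ≤ k ∧ F = Qsqrt (1 - 4 * k ^ n)} :=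
    fun i => ⟨g i, hg2 i, rfl⟩
  have hne : ∀ i j, i < j → f i ≠ f j := by
    intro i j hij heq
    have hkey : Qsqrt (-(N (g i))) = Qsqrt (-(N (g j))) := by
      have e1 : 1 - 4 * g i ^ n = -(N (g i)) := by simp only [hN]; ring
      have e2 : 1 - 4 * g j ^ n = -(N (g j)) := by simp only [hN]; ring
      simpa only [hf, e1, e2] using heq
    obtain ⟨c, hc⟩ := isSquare_of_Qsqrt_eq (by linarith [hNpos i]) (by linarith [hNpos j]) hkey
    obtain ⟨a0, ha0⟩ := Int.sq_of_isCoprime (hcop i j hij) hc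
    have hsq : N (g i) = a0 ^ 2 := by
      rcases ha0 with h | h
      · exact h
      · exfalso; nlinarith [hNpos i, sq_nonneg a0]
    -- but N (g i) ≡ 3 mod 4
    have h4 : ((N (g i) : ZMod 4)) = 3 := by
      have e3 : ((N (g i) : ZMod 4)) = 4 * ((g i : ZMod 4)) ^ n - 1 := by
        simp only [hN]; push_cast; ring
      rw [e3, show (4 : ZMod 4) = 0 from rfl, zero_mul, zero_sub]
      decide
    exact sq_ne_three_mod_four ((a0 : ZMod 4)) (by rw [← h4, hsq]; push_cast; ring)
  have hinj : Function.Injective f := by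
    intro i j h
    rcases lt_trichotomy i j with h' | h' | h'
    · exact absurd h (hne i j h')
    · exact h'
    · exact absurd h.symm (hne j i h')
  exact Set.infinite_of_injective_forall_mem hinj hmem
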